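/- (Generic MSP functions are stably MSP.) Let 𝒮 be a collection of subsets of {1,…,d} that satisfies MSP (i.e., its sets can be ordered S_1,…,S_r with |S_i ∖ (S_1 ∪ ⋯ ∪ S_{i−1})| ≤ 1 for every i). If the coefficient vector (α_S)_{S∈𝒮} is drawn from any probability measure on ℝ^{|𝒮|} that is absolutely continuous with respect to Lebesgue measure, then with probability one the function f* = Σ_{S∈𝒮} α_S χ_S satisfies SMSP. Equivalently, the set of coefficient vectors (α_S)_{S∈𝒮} ∈ ℝ^{|𝒮|} for which Σ_{S∈𝒮} α_S χ_S fails SMSP has Lebesgue measure zero. -/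

import Mathlib

open MeasureTheory ProbabilityTheory

namespace GreedyTrees

/-- The `±1` value of a Boolean coordinate. -/
def sgn (b : Bool) : ℝ := if b then 1 else -1

variable {d n : ℕ}

/-- The Fourier character (monomial) `χ_S` on the Boolean cube `{±1}^d`. -/
def chi (S : Finset (Fin d)) (x : Fin d → Bool) : ℝ := ∏ j ∈ S, sgn (x j)

/-- Expectation with respect to the uniform distribution on `{±1}^d`. -/
noncomputable def cubeMean (f : (Fin d → Bool) → ℝ) : ℝ := (∑ x : Fin d → Bool, f x) / 2 ^ d

/-- The `L²` risk `R(g, f) = E_{X ∼ ν} (g X - f X)²` for `ν` uniform on `{±1}^d`. -/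
noncomputable def cubeRisk (g f : (Fin d → Bool) → ℝ) : ℝ := cubeMean fun x => (g x - f x) ^ 2

/-- Variance with respect to the uniform distribution on `{±1}^d`. -/
noncomputable def cubeVar (f : (Fin d → Bool) → ℝ) : ℝ := cubeMean fun x => (f x - cubeMean f) ^ 2

/-- Supremum norm of a function on the cube. -/
noncomputable def supAbs (f : (Fin d → Bool) → ℝ) : ℝ := ⨆ x, |f x|

/-- Fourier coefficient `α_S` of `f`. -/
noncomputable def fourierCoeff (f : (Fin d → Bool) → ℝ) (S : Finset (Fin d)) : ℝ :=
  cubeMean fun x => f x * chi S x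

open Classical in
/-- Fourier support `𝒮` of `f` : subsets with nonzero Fourier coefficient. -/
noncomputable def fourierSupport (f : (Fin d → Bool) → ℝ) : Finset (Finset (Fin d)) :=
  Finset.univ.filter fun S => fourierCoeff f S ≠ 0

/-- Union of a list of finsets. -/
def listUnion (L : List (Finset (Fin d))) : Finset (Fin d) := L.foldr (· ∪ ·) ∅

/-- Staircase condition: each entry brings in at most one new coordinate. -/
def Staircase (L : List (Finset (Fin d))) : Prop :=
  ∀ (i : ℕ) (h : i < L.length), ((L.get ⟨i, h⟩) \ listUnion (L.take i)).card ≤ 1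

/-- The merged-staircase property (MSP) of a collection of subsets. -/
def MSP (Sc : Finset (Finset (Fin d))) : Prop :=
  ∃ L : List (Finset (Fin d)), L.toFinset = Sc ∧ L.Nodup ∧ Staircase L

/-- `S` is connected to `∅` in the Fourier graph of the collection `Sc`. -/
def ReachesEmpty (Sc : Finset (Finset (Fin d))) (S : Finset (Fin d)) : Prop :=
  ∃ L : List (Finset (Fin d)), (∀ T ∈ L, T ∈ Sc) ∧ S ∈ L ∧ Staircase L

open Classical in
/-- `𝒮_MSP` : the part of the collection connected to `∅` in the Fourier graph. -/
noncomputable def mspPart (Sc : Finset (Finset (Fin d))) : Finset (Finset (Fin d)) :=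
  Sc.filter fun S => ReachesEmpty Sc S

/-- `T` is a traversal of a collection: it meets every member in ≥ 2 coordinates. -/
def IsTraversal (Sc : Finset (Finset (Fin d))) (T : Finset (Fin d)) : Prop :=
  ∀ S ∈ Sc, 2 ≤ (T ∩ S).card

/-- The MSP residual `r_MSP = Σ_{S ∈ 𝒮 \ 𝒮_MSP} α_S χ_S` of `f`. -/
noncomputable def mspResidual (f : (Fin d → Bool) → ℝ) : (Fin d → Bool) → ℝ :=
  fun x => ∑ S ∈ fourierSupport f \ mspPart (fourierSupport f), fourierCoeff f S * chi S x

/-- Total Fourier weight `w(𝒜) = Σ_{S ∈ 𝒜} α_S²` of a collection of vertices. -/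
noncomputable def wt (f : (Fin d → Bool) → ℝ) (A : Finset (Finset (Fin d))) : ℝ :=
  ∑ S ∈ A, fourierCoeff f S ^ 2

/-- The subcube (cell) `{x : x_j = z_j for j ∈ J}` as a finset of points. -/
def subcube (J : Finset (Fin d)) (z : Fin d → Bool) : Finset (Fin d → Bool) :=
  Finset.univ.filter fun x => ∀ j ∈ J, x j = z j

/-- Conditional mean of `f` on a subcube. -/
noncomputable def subcubeMean (f : (Fin d → Bool) → ℝ) (J : Finset (Fin d))
    (z : Fin d → Bool) : ℝ :=
  (∑ x ∈ subcube J z, f x) / (subcube J z).card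

/-- Conditional covariance of `f` and `g` on a subcube. -/
noncomputable def subcubeCov (f g : (Fin d → Bool) → ℝ) (J : Finset (Fin d))
    (z : Fin d → Bool) : ℝ :=
  (∑ x ∈ subcube J z, (f x - subcubeMean f J z) * (g x - subcubeMean g J z)) /
    (subcube J z).card

/-- Conditional variance of `f` on a subcube. -/
noncomputable def subcubeVar (f : (Fin d → Bool) → ℝ) (J : Finset (Fin d))
    (z : Fin d → Bool) : ℝ :=
  subcubeCov f f J z

/-- The restriction of `f` to the subcube `(J, z)` viewed as a function of the
free coordinates. -/
def restrictCube (f : (Fin d → Bool) → ℝ) (J : Finset (Fin d)) (z : Fin d → Bool) :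
    (Fin d → Bool) → ℝ :=
  fun x => f fun j => if j ∈ J then z j else x j

/-- `f` (as a function) satisfies the merged-staircase property. -/
def MSPfun (f : (Fin d → Bool) → ℝ) : Prop := MSP (fourierSupport f)

/-- `f` satisfies the stable merged-staircase property: every restriction to a
subcube satisfies MSP. -/
def SMSPfun (f : (Fin d → Bool) → ℝ) : Prop :=
  ∀ (J : Finset (Fin d)) (z : Fin d → Bool), MSPfun (restrictCube f J z)

/-- `f ∈ SMSP(λ)` : for every subcube on which `f` is nonconstant,
`max_{k ∉ J(C)} Cov²(f(X), X_k | X ∈ C) · 2^{-|J(C) ∩ S*|} ≥ λ`. -/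
def SMSPlam (f : (Fin d → Bool) → ℝ) (Sstar : Finset (Fin d)) (lam : ℝ) : Prop :=
  ∀ (J : Finset (Fin d)) (z : Fin d → Bool),
    (∃ x ∈ subcube J z, ∃ y ∈ subcube J z, f x ≠ f y) →
    ∃ k ∉ J, lam ≤ (subcubeCov f (fun y => sgn (y k)) J z) ^ 2 *
      ((2 : ℝ) ^ (J ∩ Sstar).card)⁻¹

/-- Sub-Gaussian random variable with parameter `σ` (via the MGF bound). -/
def IsSubGaussian {Ω : Type*} [MeasurableSpace Ω] (μ : Measure Ω) (Z : Ω → ℝ)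
    (σ : ℝ) : Prop :=
  ∀ t : ℝ, ∫ ω, Real.exp (t * Z ω) ∂μ ≤ Real.exp (σ ^ 2 * t ^ 2 / 2)

/-- Indices of the samples lying in the cell determined by the values of `x`
on the coordinates in `J`. -/
def cellIdx (X : Fin n → Fin d → Bool) (x : Fin d → Bool) (J : Finset (Fin d)) :
    Finset (Fin n) :=
  Finset.univ.filter fun i => ∀ j ∈ J, X i j = x j

/-- Value of a split criterion `F` at coordinate `k` in a cell: it depends on
the data only through the marginal data `{(X_{ik}, Y_i) : i in the cell}`. -/
def critVal (F : Multiset (Bool × ℝ) → ℝ) (X : Fin n → Fin d → Bool) (Y : Fin n → ℝ)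
    (x : Fin d → Bool) (J : Finset (Fin d)) (k : Fin d) : ℝ :=
  F ((cellIdx X x J).val.map fun i => (X i k, Y i))

/-- Abstract model of a regression tree fitted by a greedy tree algorithm:
for every dataset and query point it records the coordinates split on along the
root-to-leaf path of the query point.  Each split coordinate maximizes a fixed
sign-flip invariant criterion `F` of the marginal data in the current cell,
every split cell contains at least one sample, and the path depends on the
query point only through the coordinates split along it (tree structure). -/
structure GreedyTreeModel (n d : ℕ) where
  F : Multiset (Bool × ℝ) → ℝ
  flip_invariant : ∀ m : Multiset (Bool × ℝ), F (m.map fun p => (!p.1, p.2)) = F m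
  splits : (Fin n → Fin d → Bool) → (Fin n → ℝ) → (Fin d → Bool) → List (Fin d)
  nodup : ∀ X Y x, (splits X Y x).Nodup
  greedy : ∀ X Y x (t : ℕ) (ht : t < (splits X Y x).length) (k : Fin d),
      k ∉ ((splits X Y x).take t).toFinset →
      critVal F X Y x ((splits X Y x).take t).toFinset k ≤
        critVal F X Y x ((splits X Y x).take t).toFinset ((splits X Y x).get ⟨t, ht⟩)
  nonempty_internal : ∀ X Y x (t : ℕ), t < (splits X Y x).length →
      (cellIdx X x ((splits X Y x).take t).toFinset).Nonempty
  consistent : ∀ X Y x x', (∀ j ∈ splits X Y x, x j = x' j) → splits X Y x' = splits X Y x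

/-- The set `J(x; D_n, Θ)` of coordinates split along the query path of `x`. -/
def GreedyTreeModel.queryCoords (M : GreedyTreeModel n d) (X : Fin n → Fin d → Bool)
    (Y : Fin n → ℝ) (x : Fin d → Bool) : Finset (Fin d) :=
  (M.splits X Y x).toFinset

/-- Prediction of the fitted tree: the mean response in the leaf containing `x`. -/
noncomputable def GreedyTreeModel.pred (M : GreedyTreeModel n d)
    (X : Fin n → Fin d → Bool) (Y : Fin n → ℝ) (x : Fin d → Bool) : ℝ :=
  (∑ i ∈ cellIdx X x (M.queryCoords X Y x), Y i) /
    (cellIdx X x (M.queryCoords X Y x)).card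

/-- Mean of a multiset of reals. -/
noncomputable def msetMean (m : Multiset ℝ) : ℝ := m.sum / (m.card : ℝ)

/-- Empirical variance (impurity) of a multiset of reals. -/
noncomputable def msetVar (m : Multiset ℝ) : ℝ :=
  ((m.map fun y => (y - msetMean m) ^ 2).sum) / (m.card : ℝ)

/-- The CART impurity decrease, as a function of the marginal data
`{(X_{ik}, Y_i)}` of a coordinate in a cell. -/
noncomputable def impurityDecrease (m : Multiset (Bool × ℝ)) : ℝ :=
  msetVar (m.map Prod.snd) -
    (((m.filter fun p => p.1 = true).card : ℝ) / (m.card : ℝ)) *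
      msetVar ((m.filter fun p => p.1 = true).map Prod.snd) -
    (((m.filter fun p => p.1 = false).card : ℝ) / (m.card : ℝ)) *
      msetVar ((m.filter fun p => p.1 = false).map Prod.snd)

/-- A CART model: a greedy tree model whose criterion is the impurity decrease,
grown with the minimum impurity decrease stopping rule with threshold `γ`. -/
structure CARTModel (n d : ℕ) (γ : ℝ) extends GreedyTreeModel n d where
  F_eq : F = impurityDecrease
  continue_split : ∀ X Y x (t : ℕ) (ht : t < (splits X Y x).length),
      γ ≤ (((cellIdx X x ((splits X Y x).take t).toFinset).card : ℝ) / (n : ℝ)) *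
        critVal impurityDecrease X Y x ((splits X Y x).take t).toFinset
          ((splits X Y x).get ⟨t, ht⟩)
  stop_leaf : ∀ X Y x (k : Fin d), k ∉ (splits X Y x).toFinset →
      (((cellIdx X x (splits X Y x).toFinset).card : ℝ) / (n : ℝ)) *
        critVal impurityDecrease X Y x (splits X Y x).toFinset k < γ

/-- Number of samples in the subcube `(J, z)`. -/
def cellN (X : Fin n → Fin d → Bool) (J : Finset (Fin d)) (z : Fin d → Bool) : ℕ :=
  (cellIdx X z J).card

/-- Mean response over the samples in the subcube `(J, z)`. -/
noncomputable def cellYbar (X : Fin n → Fin d → Bool) (Y : Fin n → ℝ)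
    (J : Finset (Fin d)) (z : Fin d → Bool) : ℝ :=
  (∑ i ∈ cellIdx X z J, Y i) / (cellN X J z : ℝ)

/-- Empirical square-root impurity decrease
`Δ̂^{1/2}(k; C, D) = √(p_k(C)(1 - p_k(C))) (Ȳ_{T_{k,1}C} - Ȳ_{T_{k,-1}C})`. -/
noncomputable def empSqrtID (X : Fin n → Fin d → Bool) (Y : Fin n → ℝ)
    (J : Finset (Fin d)) (z : Fin d → Bool) (k : Fin d) : ℝ :=
  Real.sqrt (((cellN X (insert k J) (Function.update z k true) : ℝ) / (cellN X J z : ℝ)) *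
      (1 - (cellN X (insert k J) (Function.update z k true) : ℝ) / (cellN X J z : ℝ))) *
    (cellYbar X Y (insert k J) (Function.update z k true) -
      cellYbar X Y (insert k J) (Function.update z k false))

/-- Population square-root impurity decrease
`Δ^{1/2}(k; C) = (E[Y | X ∈ T_{k,1}C] - E[Y | X ∈ T_{k,-1}C]) / 2`
(for zero-mean noise, conditional means of `Y` equal conditional means of `f*`). -/
noncomputable def popSqrtID (f : (Fin d → Bool) → ℝ) (J : Finset (Fin d))
    (z : Fin d → Bool) (k : Fin d) : ℝ :=
  (subcubeMean f (insert k J) (Function.update z k true) -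
    subcubeMean f (insert k J) (Function.update z k false)) / 2

/-- Binary decision tree with axis-aligned splits and real leaf labels. -/
inductive TreeFun (d : ℕ) : Type
  | leaf : ℝ → TreeFun d
  | node : Fin d → TreeFun d → TreeFun d → TreeFun d

/-- Evaluation of a tree as a piecewise constant function on the cube. -/
def TreeFun.eval : TreeFun d → (Fin d → Bool) → ℝ
  | .leaf c, _ => c
  | .node k l r, x => if x k then TreeFun.eval r x else TreeFun.eval l x

/-- Depth of a tree. -/
def TreeFun.depth : TreeFun d → ℕ
  | .leaf _ => 0
  | .node _ l r => max (TreeFun.depth l) (TreeFun.depth r) + 1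

/-- All leaf labels bounded by `M` in absolute value. -/
def TreeFun.leafBound (M : ℝ) : TreeFun d → Prop
  | .leaf c => |c| ≤ M
  | .node _ l r => TreeFun.leafBound M l ∧ TreeFun.leafBound M r

/-- Empirical `L²` risk of a tree on a dataset. -/
noncomputable def empRisk (D : Fin n → (Fin d → Bool) × ℝ) (t : TreeFun d) : ℝ :=
  (∑ i, ((D i).2 - t.eval (D i).1) ^ 2) / n

/-- A greedy tree grown along the query path of a point with every cell being
split (no stopping rule): the path has full length `d`. -/
structure FullGreedyPath (n d : ℕ) where
  F : Multiset (Bool × ℝ) → ℝ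
  flip_invariant : ∀ m : Multiset (Bool × ℝ), F (m.map fun p => (!p.1, p.2)) = F m
  splits : (Fin n → Fin d → Bool) → (Fin n → ℝ) → (Fin d → Bool) → List (Fin d)
  nodup : ∀ X Y x, (splits X Y x).Nodup
  length_eq : ∀ X Y x, (splits X Y x).length = d
  greedy : ∀ X Y x (t : ℕ) (ht : t < (splits X Y x).length) (k : Fin d),
      k ∉ ((splits X Y x).take t).toFinset →
      critVal F X Y x ((splits X Y x).take t).toFinset k ≤
        critVal F X Y x ((splits X Y x).take t).toFinset ((splits X Y x).get ⟨t, ht⟩)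



section AuxSMSP
open scoped symmDiff

def StairAux (U : Finset (Fin d)) : List (Finset (Fin d)) → Prop
  | [] => True
  | a :: l => (a \ U).card ≤ 1 ∧ StairAux (U ∪ a) l

lemma stairAux_iff : ∀ (L : List (Finset (Fin d))) (U : Finset (Fin d)),
    StairAux U L ↔ ∀ (i : ℕ) (h : i < L.length),
      ((L.get ⟨i, h⟩) \ (U ∪ listUnion (L.take i))).card ≤ 1 := by
  intro L
  induction L with
  | nil => intro U; simp [StairAux]
  | cons a l ih =>
    intro U
    constructor
    · rintro ⟨h1, h2⟩ i hi
      cases i with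
      | zero => simpa [listUnion] using h1
      | succ i =>
        have := (ih (U ∪ a)).1 h2 i (by simpa using hi)
        simpa [listUnion, Finset.union_assoc] using this
    · intro h
      refine ⟨by simpa [listUnion] using h 0 (by simp), (ih (U ∪ a)).2 ?_⟩
      intro i hi
      have := h (i + 1) (by simpa using hi)
      simpa [listUnion, Finset.union_assoc] using this

lemma staircase_iff_stairAux (L : List (Finset (Fin d))) :
    Staircase L ↔ StairAux ∅ L := by
  rw [stairAux_iff]; simp [Staircase]

def dgo : List (Finset (Fin d)) → List (Finset (Fin d)) → List (Finset (Fin d))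
  | _, [] => []
  | seen, a :: l => if a ∈ seen then dgo seen l else a :: dgo (a :: seen) l

lemma mem_of_mem_dgo : ∀ (L seen : List (Finset (Fin d))) (b : Finset (Fin d)),
    b ∈ dgo seen L → b ∈ L ∧ b ∉ seen := by
  intro L
  induction L with
  | nil => intro seen b hb; simp [dgo] at hb
  | cons a l ih =>
    intro seen b hb
    by_cases h : a ∈ seen
    · simp only [dgo, if_pos h] at hb
      have := ih seen b hb
      exact ⟨List.mem_cons_of_mem _ this.1, this.2⟩
    · simp only [dgo, if_neg h] at hb
      rcases List.mem_cons.1 hb with rfl | hb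
      · exact ⟨List.mem_cons_self, h⟩
      · have := ih (a :: seen) b hb
        exact ⟨List.mem_cons_of_mem _ this.1, fun hc => this.2 (List.mem_cons_of_mem _ hc)⟩

lemma dgo_nodup : ∀ (L seen : List (Finset (Fin d))), (dgo seen L).Nodup := by
  intro L
  induction L with
  | nil => intro seen; simp [dgo]
  | cons a l ih =>
    intro seen
    by_cases h : a ∈ seen
    · simpa only [dgo, if_pos h] using ih seen
    · simp only [dgo, if_neg h]
      refine List.nodup_cons.2 ⟨fun hc => ?_, ih _⟩
      exact (mem_of_mem_dgo l (a :: seen) a hc).2 (List.mem_cons_self)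

lemma dgo_toFinset : ∀ (L seen : List (Finset (Fin d))),
    (dgo seen L).toFinset = L.toFinset \ seen.toFinset := by
  intro L
  induction L with
  | nil => intro seen; simp [dgo]
  | cons a l ih =>
    intro seen
    by_cases h : a ∈ seen
    · simp only [dgo, if_pos h, ih, List.toFinset_cons]
      ext x
      simp only [Finset.mem_sdiff, Finset.mem_insert, List.mem_toFinset]
      constructor
      · rintro ⟨h1, h2⟩; exact ⟨Or.inr h1, h2⟩
      · rintro ⟨rfl | h1, h2⟩
        · exact absurd h h2
        · exact ⟨h1, h2⟩
    · simp only [dgo, if_neg h, ih, List.toFinset_cons]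
      ext x
      simp only [Finset.mem_insert, Finset.mem_sdiff, List.mem_toFinset, List.mem_cons]
      constructor
      · rintro (rfl | ⟨h1, h2⟩)
        · exact ⟨Or.inl rfl, h⟩
        · exact ⟨Or.inr h1, fun hc => h2 (Or.inr hc)⟩
      · rintro ⟨rfl | h1, h2⟩
        · exact Or.inl rfl
        · by_cases hxa : x = a
          · exact Or.inl hxa
          · exact Or.inr ⟨h1, fun hc => hc.elim hxa h2⟩

lemma dgo_stairAux : ∀ (L : List (Finset (Fin d))) (U : Finset (Fin d))
    (seen : List (Finset (Fin d))), StairAux U L → (∀ a ∈ seen, a ⊆ U) →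
    StairAux U (dgo seen L) := by
  intro L
  induction L with
  | nil => intro U seen _ _; simp [dgo, StairAux]
  | cons a l ih =>
    intro U seen hS hseen
    by_cases h : a ∈ seen
    · have hUa : U ∪ a = U := Finset.union_eq_left.2 (hseen a h)
      simp only [dgo, if_pos h]
      exact ih U seen (by rw [← hUa]; exact hS.2) hseen
    · simp only [dgo, if_neg h]
      refine ⟨hS.1, ih (U ∪ a) (a :: seen) hS.2 ?_⟩
      intro b hb
      rcases List.mem_cons.1 hb with rfl | hb
      · exact Finset.subset_union_right
      · exact (hseen b hb).trans Finset.subset_union_left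

lemma msp_of_list (Sc : Finset (Finset (Fin d))) (L : List (Finset (Fin d)))
    (hL : L.toFinset = Sc) (hS : Staircase L) : MSP Sc := by
  refine ⟨dgo ([]) L, ?_, dgo_nodup L ([]), ?_⟩
  · rw [dgo_toFinset]; simp [hL]
  · rw [staircase_iff_stairAux]
    exact dgo_stairAux L ∅ ([]) ((staircase_iff_stairAux L).1 hS) (by simp)

lemma stairAux_map (J : Finset (Fin d)) :
    ∀ (L : List (Finset (Fin d))) (U : Finset (Fin d)),
      StairAux U L → StairAux (U \ J) (L.map (· \ J)) := by
  intro L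
  induction L with
  | nil => intro U _; simp [StairAux]
  | cons a l ih =>
    intro U hS
    refine ⟨?_, ?_⟩
    · refine le_trans (Finset.card_le_card ?_) hS.1
      intro x hx
      simp only [Finset.mem_sdiff] at hx ⊢
      exact ⟨hx.1.1, fun hU => hx.2 ⟨hU, hx.1.2⟩⟩
    · have := ih (U ∪ a) hS.2
      rwa [Finset.union_sdiff_distrib] at this

lemma msp_image (Sc : Finset (Finset (Fin d))) (J : Finset (Fin d)) (h : MSP Sc) :
    MSP (Sc.image (· \ J)) := by
  classical
  obtain ⟨L, hL, _, hS⟩ := h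
  refine msp_of_list _ (L.map (· \ J)) ?_ ?_
  · ext x; simp [← hL]
  · rw [staircase_iff_stairAux]
    simpa using stairAux_map J L ∅ ((staircase_iff_stairAux L).1 hS)


lemma sgn_mul_self (b : Bool) : sgn b * sgn b = 1 := by cases b <;> simp [sgn]

lemma sgn_ne_zero (b : Bool) : sgn b ≠ 0 := by cases b <;> simp [sgn]

lemma sum_chi (U : Finset (Fin d)) :
    ∑ x : Fin d → Bool, chi U x = if U = ∅ then (2 : ℝ) ^ d else 0 := by
  classical
  have h1 : ∀ x : Fin d → Bool,
      chi U x = ∏ j : Fin d, (if j ∈ U then sgn (x j) else 1) := by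
    intro x
    rw [Finset.prod_ite_mem Finset.univ U fun j => sgn (x j), Finset.univ_inter]
    rfl
  simp only [h1]
  rw [show (Finset.univ : Finset (Fin d → Bool)) =
      Fintype.piFinset (fun _ : Fin d => (Finset.univ : Finset Bool)) from
    (Fintype.piFinset_univ).symm,
    ← Finset.prod_univ_sum (fun _ : Fin d => (Finset.univ : Finset Bool))
      (fun j b => if j ∈ U then sgn b else 1)]
  have h2 : ∀ j : Fin d, (∑ b : Bool, if j ∈ U then sgn b else 1)
      = if j ∈ U then 0 else 2 := by
    intro j
    by_cases hj : j ∈ U <;> simp [hj, sgn, Fintype.sum_bool]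
  rw [Finset.prod_congr rfl fun j _ => h2 j]
  by_cases hU : U = ∅
  · simp [hU]
  · rw [if_neg hU]
    obtain ⟨j, hj⟩ := Finset.nonempty_iff_ne_empty.2 hU
    exact Finset.prod_eq_zero (Finset.mem_univ j) (by simp [hj])

lemma cubeMean_chi (U : Finset (Fin d)) : cubeMean (chi U) = if U = ∅ then 1 else 0 := by
  unfold cubeMean
  rw [sum_chi]
  by_cases hU : U = ∅ <;> simp [hU]

lemma chi_mul (S T : Finset (Fin d)) (x : Fin d → Bool) :
    chi S x * chi T x = chi (S ∆ T) x := by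
  classical
  have hd : Disjoint (S \ T) (T \ S) := disjoint_sdiff_sdiff
  have h1 : chi (S ∆ T) x = (∏ j ∈ S \ T, sgn (x j)) * ∏ j ∈ T \ S, sgn (x j) := by
    rw [show S ∆ T = (S \ T) ∪ (T \ S) from symmDiff_def S T]
    exact Finset.prod_union hd
  have h2 : chi S x = (∏ j ∈ S ∩ T, sgn (x j)) * ∏ j ∈ S \ T, sgn (x j) :=
    (Finset.prod_inter_mul_prod_diff S T _).symm
  have h3 : chi T x = (∏ j ∈ S ∩ T, sgn (x j)) * ∏ j ∈ T \ S, sgn (x j) := by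
    unfold chi
    rw [← Finset.prod_inter_mul_prod_diff T S, Finset.inter_comm]
  have h4 : (∏ j ∈ S ∩ T, sgn (x j)) * (∏ j ∈ S ∩ T, sgn (x j)) = 1 := by
    rw [← Finset.prod_mul_distrib]
    simp [sgn_mul_self]
  rw [h2, h3, h1, mul_mul_mul_comm, h4, one_mul]

lemma cubeMean_chi_mul (S T : Finset (Fin d)) :
    cubeMean (fun x => chi S x * chi T x) = if S = T then 1 else 0 := by
  simp only [chi_mul]
  rw [show (fun x => chi (S ∆ T) x) = chi (S ∆ T) from rfl, cubeMean_chi]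
  by_cases h : S = T
  · subst h; simp [symmDiff_self]
  · rw [if_neg h, if_neg fun hc => h (symmDiff_eq_bot.1 (by rw [← Finset.bot_eq_empty] at hc; exact hc))]

lemma cubeMean_sum {ι : Type*} (A : Finset ι) (h : ι → (Fin d → Bool) → ℝ) :
    cubeMean (fun x => ∑ s ∈ A, h s x) = ∑ s ∈ A, cubeMean (h s) := by
  unfold cubeMean
  rw [Finset.sum_comm, Finset.sum_div]

lemma cubeMean_const_mul (c : ℝ) (g : (Fin d → Bool) → ℝ) :
    cubeMean (fun x => c * g x) = c * cubeMean g := by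
  unfold cubeMean
  rw [← Finset.mul_sum, mul_div_assoc]

lemma chi_restrict (S J : Finset (Fin d)) (z x : Fin d → Bool) :
    chi S (fun j => if j ∈ J then z j else x j)
      = (∏ j ∈ S ∩ J, sgn (z j)) * chi (S \ J) x := by
  classical
  unfold chi
  rw [← Finset.prod_inter_mul_prod_diff S J]
  congr 1
  · exact Finset.prod_congr rfl fun j hj => congrArg sgn (if_pos (Finset.mem_inter.1 hj).2)
  · exact Finset.prod_congr rfl fun j hj => congrArg sgn (if_neg (Finset.mem_sdiff.1 hj).2)

lemma coeff_restrict (Sc : Finset (Finset (Fin d))) (α : {S // S ∈ Sc} → ℝ)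
    (J : Finset (Fin d)) (z : Fin d → Bool) (T : Finset (Fin d)) :
    fourierCoeff
        (restrictCube (fun x => ∑ S ∈ Sc.attach, α S * chi (S : Finset (Fin d)) x) J z) T
      = ∑ S ∈ Sc.attach.filter (fun S : {S // S ∈ Sc} => (S : Finset (Fin d)) \ J = T),
          (∏ j ∈ (S : Finset (Fin d)) ∩ J, sgn (z j)) * α S := by
  classical
  unfold fourierCoeff restrictCube
  have key : ∀ x : Fin d → Bool,
      (∑ S ∈ Sc.attach, α S * chi (S : Finset (Fin d)) (fun j => if j ∈ J then z j else x j))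
          * chi T x
        = ∑ S ∈ Sc.attach,
            ((∏ j ∈ (S : Finset (Fin d)) ∩ J, sgn (z j)) * α S)
              * (chi ((S : Finset (Fin d)) \ J) x * chi T x) := by
    intro x
    rw [Finset.sum_mul]
    refine Finset.sum_congr rfl fun S _ => ?_
    rw [chi_restrict]; ring
  simp only [key]
  rw [cubeMean_sum]
  have h2 : ∀ S ∈ Sc.attach,
      cubeMean (fun x => ((∏ j ∈ (S : Finset (Fin d)) ∩ J, sgn (z j)) * α S)
          * (chi ((S : Finset (Fin d)) \ J) x * chi T x))
        = if (S : Finset (Fin d)) \ J = T then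
            (∏ j ∈ (S : Finset (Fin d)) ∩ J, sgn (z j)) * α S else 0 := by
    intro S _
    rw [cubeMean_const_mul, cubeMean_chi_mul]
    by_cases h : (S : Finset (Fin d)) \ J = T <;> simp [h]
  rw [Finset.sum_congr rfl h2, ← Finset.sum_filter]

lemma null_hyperplane {ι : Type*} [Fintype ι] (c : ι → ℝ) (i₀ : ι) (h : c i₀ ≠ 0) :
    volume {α : ι → ℝ | ∑ i, c i * α i = 0} = 0 := by
  classical
  set φ : (ι → ℝ) →ₗ[ℝ] ℝ := ∑ i, c i • LinearMap.proj i with hφdef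
  have hφ : ∀ α, φ α = ∑ i, c i * α i := by
    intro α
    simp [hφdef, LinearMap.sum_apply, LinearMap.smul_apply, LinearMap.proj_apply, smul_eq_mul]
  have hker : LinearMap.ker φ ≠ ⊤ := by
    intro hc
    have h0 : φ (Pi.single i₀ 1) = 0 := by
      have : Pi.single i₀ (1:ℝ) ∈ LinearMap.ker φ := by rw [hc]; trivial
      exact LinearMap.mem_ker.1 this
    rw [hφ] at h0
    rw [Finset.sum_eq_single i₀ (fun b _ hb => by simp [Pi.single_apply, hb])
      (fun hb => absurd (Finset.mem_univ i₀) hb)] at h0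
    simp [Pi.single_apply] at h0
    exact h h0
  have hset : {α : ι → ℝ | ∑ i, c i * α i = 0} = (LinearMap.ker φ : Set (ι → ℝ)) := by
    ext α; simp [LinearMap.mem_ker, hφ]
  rw [hset]
  exact Measure.addHaar_submodule volume _ hker


end AuxSMSP

/-- Generic MSP functions are stably MSP.  If the collection
`𝒮` satisfies MSP and the coefficient vector `(α_S)_{S ∈ 𝒮}` is drawn from a
probability measure on `ℝ^{|𝒮|}` absolutely continuous with respect to
Lebesgue measure, then almost surely `f* = Σ_S α_S χ_S` satisfies SMSP. -/
theorem generic_msp_functions_are_smsp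
    (d : ℕ) (Sc : Finset (Finset (Fin d))) (hmsp : MSP Sc)
    (P : Measure ({S // S ∈ Sc} → ℝ)) [IsProbabilityMeasure P]
    (hac : P ≪ MeasureTheory.volume) :
    P {α | ¬ SMSPfun (fun x => ∑ S ∈ Sc.attach, α S * chi (S : Finset (Fin d)) x)} = 0 := by
  classical
  have key : ∀ (J : Finset (Fin d)) (z : Fin d → Bool) (T : Finset (Fin d)),
      (Sc.attach.filter (fun S : {S // S ∈ Sc} => (S : Finset (Fin d)) \ J = T)).Nonempty →
      volume {α : {S // S ∈ Sc} → ℝ |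
        ∑ S ∈ Sc.attach.filter (fun S : {S // S ∈ Sc} => (S : Finset (Fin d)) \ J = T),
          (∏ j ∈ (S : Finset (Fin d)) ∩ J, sgn (z j)) * α S = 0} = 0 := by
    intro J z T hne
    obtain ⟨S₀, hS₀⟩ := hne
    have hsum : ∀ α : {S // S ∈ Sc} → ℝ,
        ∑ S ∈ Sc.attach.filter (fun S : {S // S ∈ Sc} => (S : Finset (Fin d)) \ J = T),
            (∏ j ∈ (S : Finset (Fin d)) ∩ J, sgn (z j)) * α S
          = ∑ S : {S // S ∈ Sc},
              (if (S : Finset (Fin d)) \ J = T then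
                ∏ j ∈ (S : Finset (Fin d)) ∩ J, sgn (z j) else 0) * α S := by
      intro α
      rw [Finset.sum_filter, Finset.univ_eq_attach]
      exact Finset.sum_congr rfl fun S _ => by
        by_cases h : (S : Finset (Fin d)) \ J = T <;> simp [h]
    have hset : {α : {S // S ∈ Sc} → ℝ |
        ∑ S ∈ Sc.attach.filter (fun S : {S // S ∈ Sc} => (S : Finset (Fin d)) \ J = T),
          (∏ j ∈ (S : Finset (Fin d)) ∩ J, sgn (z j)) * α S = 0}
        = {α : {S // S ∈ Sc} → ℝ | ∑ S : {S // S ∈ Sc},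
            (if (S : Finset (Fin d)) \ J = T then
              ∏ j ∈ (S : Finset (Fin d)) ∩ J, sgn (z j) else 0) * α S = 0} := by
      ext α
      simp only [Set.mem_setOf_eq, hsum]
    rw [hset]
    refine null_hyperplane _ S₀ ?_
    rw [if_pos (Finset.mem_filter.1 hS₀).2]
    exact Finset.prod_ne_zero_iff.2 fun j _ => sgn_ne_zero (z j)
  have hbad : {α : {S // S ∈ Sc} → ℝ |
      ¬ SMSPfun (fun x => ∑ S ∈ Sc.attach, α S * chi (S : Finset (Fin d)) x)}
      ⊆ ⋃ (J : Finset (Fin d)) (z : Fin d → Bool) (T : Finset (Fin d))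
          (_ : (Sc.attach.filter (fun S : {S // S ∈ Sc} =>
                (S : Finset (Fin d)) \ J = T)).Nonempty),
          {α : {S // S ∈ Sc} → ℝ |
            ∑ S ∈ Sc.attach.filter (fun S : {S // S ∈ Sc} => (S : Finset (Fin d)) \ J = T),
              (∏ j ∈ (S : Finset (Fin d)) ∩ J, sgn (z j)) * α S = 0} := by
    intro α hα
    by_contra hc
    simp only [Set.mem_iUnion, not_exists, Set.mem_setOf_eq] at hc
    apply hα
    intro J z
    have hsupp : fourierSupport
        (restrictCube (fun x => ∑ S ∈ Sc.attach, α S * chi (S : Finset (Fin d)) x) J z)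
        = Sc.image (· \ J) := by
      ext T
      simp only [fourierSupport, Finset.mem_filter, Finset.mem_univ, true_and]
      rw [coeff_restrict Sc α J z T]
      constructor
      · intro hne0
        rcases Finset.eq_empty_or_nonempty (Sc.attach.filter
            (fun S : {S // S ∈ Sc} => (S : Finset (Fin d)) \ J = T)) with he | hne
        · rw [he, Finset.sum_empty] at hne0; exact absurd rfl hne0
        · obtain ⟨S, hS⟩ := hne
          exact Finset.mem_image.2 ⟨S, S.2, (Finset.mem_filter.1 hS).2⟩
      · intro hT
        obtain ⟨Sv, hSv, hSvT⟩ := Finset.mem_image.1 hT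
        exact hc J z T ⟨⟨Sv, hSv⟩, Finset.mem_filter.2 ⟨Finset.mem_attach _ _, hSvT⟩⟩
    rw [MSPfun, hsupp]
    exact msp_image Sc J hmsp
  refine measure_mono_null hbad ?_
  exact measure_iUnion_null fun J => measure_iUnion_null fun z =>
    measure_iUnion_null fun T => measure_iUnion_null fun hne => hac (key J z T hne)


end GreedyTrees
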